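/- Let k be an infinite field, let m and n be positive integers, and for each index i ∈ {1,…,m} let a_i ∈ ℕⁿ be a weight vector. Let the torus (kˣ)ⁿ act on k^m by (t • v)_i = (∏_{j=1}^n t_j^{a_{ij}}) · v_i, and define π : k^m → k^m by π(v)_i = v_i if a_i = 0 and π(v)_i = 0 otherwise. Suppose Z ⊆ k^m is the zero locus of a set of polynomials in k[x_1,…,x_m] and that t • z ∈ Z for all t ∈ (kˣ)ⁿ and z ∈ Z. Then π(z) ∈ Z for every z ∈ Z; in particular, if Z is nonempty, then Z contains a point fixed by the whole torus action. -/

import Mathlib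

/-- If a torus `(kˣ)ⁿ` acts on `k^m` with nonnegative weights `a_i ∈ ℕⁿ`, and `Z` is a
torus-stable zero locus of polynomials, then the "limit map" `π` (projection onto the
coordinates of weight zero) maps `Z` into itself; in particular a nonempty such `Z`
contains a torus-fixed point. -/
theorem stable_zero_locus_contains_fixed_point
    {k : Type*} [Field k] [Infinite k] (m n : ℕ) (hm : 0 < m) (hn : 0 < n)
    (a : Fin m → Fin n → ℕ)
    (act : (Fin n → kˣ) → (Fin m → k) → (Fin m → k))
    (hact : ∀ t v i, act t v i = (∏ j, (t j : k) ^ (a i j)) * v i)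
    (π : (Fin m → k) → (Fin m → k))
    (hπ : ∀ v i, π v i = if a i = 0 then v i else 0)
    (P : Set (MvPolynomial (Fin m) k))
    (Z : Set (Fin m → k))
    (hZ : Z = {v : Fin m → k | ∀ f ∈ P, MvPolynomial.eval v f = 0})
    (hstab : ∀ t, ∀ z ∈ Z, act t z ∈ Z) :
    (∀ z ∈ Z, π z ∈ Z) ∧ (Z.Nonempty → ∃ z ∈ Z, ∀ t, act t z = z) := by
  have key : ∀ z ∈ Z, π z ∈ Z := by
    intro z hz
    rw [hZ]
    intro f hf
    -- one-variable polynomial obtained by substituting s along the diagonal torus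
    set p : Polynomial k :=
      MvPolynomial.eval₂ Polynomial.C
        (fun i => Polynomial.C (z i) * Polynomial.X ^ (∑ j, a i j)) f with hp
    have heval : ∀ s : k, p.eval s =
        MvPolynomial.eval (fun i => z i * s ^ (∑ j, a i j)) f := by
      intro s
      rw [hp]
      rw [show Polynomial.eval s = (Polynomial.evalRingHom s : Polynomial k →+* k) from rfl]
      rw [MvPolynomial.eval₂_comp_left]
      simp [MvPolynomial.eval, MvPolynomial.eval₂_eq]
    -- p vanishes at every nonzero s
    have hroots : ∀ s : k, s ≠ 0 → p.eval s = 0 := by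
      intro s hs
      rw [heval]
      have := hstab (fun _ => Units.mk0 s hs) z hz
      rw [hZ] at this
      have h2 := this f hf
      have : (fun i => z i * s ^ (∑ j, a i j)) =
          act (fun _ => Units.mk0 s hs) z := by
        funext i
        rw [hact]
        simp [Finset.prod_pow_eq_pow_sum, mul_comm]
      rw [this]
      exact h2
    have hp0 : p = 0 := by
      apply Polynomial.eq_zero_of_infinite_isRoot
      apply Set.Infinite.mono (s := {s : k | s ≠ 0})
      · intro s hs
        exact hroots s hs
      · have h := (Set.finite_singleton (0 : k)).infinite_compl
        convert h using 1
        ext; simp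
    have h0 : p.eval 0 = 0 := by rw [hp0]; simp
    rw [heval] at h0
    have hfun : (fun i => z i * (0 : k) ^ (∑ j, a i j)) = π z := by
      funext i
      rw [hπ]
      by_cases h : a i = 0
      · simp [h]
      · have hsum : ∑ j, a i j ≠ 0 := by
          intro hsum
          apply h
          funext j
          exact Finset.sum_eq_zero_iff.mp hsum j (Finset.mem_univ j)
        simp [h, zero_pow hsum]
    rwa [hfun] at h0
  refine ⟨key, fun ⟨z, hz⟩ => ⟨π z, key z hz, fun t => ?_⟩⟩
  funext i
  rw [hact, hπ]
  by_cases h : a i = 0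
  · simp [h, hπ]
  · simp [h, hπ]
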